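/- Let g be a finite-dimensional real Lie algebra with a nice basis (e_1, …, e_n). Then every term g^m of the lower central series of g (g^0 = g, g^{m+1} = ⁅g, g^m⁆) is spanned by a subset of the basis: for each m there is a subset s_m of {1,…,n} with g^m = span{e_i : i ∈ s_m}. -/

import Mathlib

/-- The structure constants of a basis of a real Lie algebra. -/
noncomputable def structConst {g : Type*} [LieRing g] [LieAlgebra ℝ g] {n : ℕ}
    (b : Module.Basis (Fin n) ℝ g) (i j k : Fin n) : ℝ :=
  b.repr ⁅b i, b j⁆ k

/-- A basis of a real Lie algebra is *nice*. -/
def IsNiceBasis {g : Type*} [LieRing g] [LieAlgebra ℝ g] {n : ℕ}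
    (b : Module.Basis (Fin n) ℝ g) : Prop :=
  (∀ i j, ∃ (k : Fin n) (c : ℝ), ⁅b i, b j⁆ = c • b k) ∧
  (∀ i k j j', structConst b i j k ≠ 0 → structConst b i j' k ≠ 0 → j = j')

lemma sum_lie_aux {g : Type*} [LieRing g] {ι : Type*} (t : Finset ι) (f : ι → g) (y : g) :
    ⁅∑ i ∈ t, f i, y⁆ = ∑ i ∈ t, ⁅f i, y⁆ := by
  induction t using Finset.cons_induction with
  | empty => simp
  | cons a t ha ih => simp [Finset.sum_cons, add_lie, ih]

/-- Every term of the lower central series of a Lie algebra with a nice basis is spanned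
by a subset of the basis. -/
theorem lowerCentralSeries_adapted (g : Type*) [LieRing g] [LieAlgebra ℝ g]
    [FiniteDimensional ℝ g] {n : ℕ} (b : Module.Basis (Fin n) ℝ g) (hb : IsNiceBasis b)
    (m : ℕ) :
    ∃ s : Set (Fin n),
      (LieModule.lowerCentralSeries ℝ g g m : Submodule ℝ g) = Submodule.span ℝ (⇑b '' s) := by
  induction m with
  | zero =>
    refine ⟨Set.univ, ?_⟩
    simp [Set.image_univ, b.span_eq]
  | succ m ih =>
    obtain ⟨s, hs⟩ := ih
    set s' : Set (Fin n) := {k | ∃ i, ∃ j ∈ s, ∃ c : ℝ, c ≠ 0 ∧ ⁅b i, b j⁆ = c • b k} with hs'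
    refine ⟨s', ?_⟩
    rw [LieModule.lowerCentralSeries_succ, LieIdeal.toLieSubalgebra_toSubmodule,
      LieSubmodule.lieIdeal_oper_eq_linear_span']
    apply le_antisymm
    · apply Submodule.span_le.2
      rintro _ ⟨x, -, y, hy, rfl⟩
      have hy' : y ∈ Submodule.span ℝ (⇑b '' s) := by
        rw [← hs]; exact hy
      clear hy
      have key : ∀ i, ⁅b i, y⁆ ∈ Submodule.span ℝ (⇑b '' s') := by
        intro i
        induction hy' using Submodule.span_induction with
        | mem z hz =>
          obtain ⟨j, hj, rfl⟩ := hz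
          obtain ⟨k, c, hc⟩ := hb.1 i j
          rcases eq_or_ne c 0 with h0 | h0
          · rw [hc, h0, zero_smul]; exact Submodule.zero_mem _
          · rw [hc]
            exact Submodule.smul_mem _ c (Submodule.subset_span ⟨k, ⟨i, j, hj, c, h0, hc⟩, rfl⟩)
        | zero => rw [lie_zero]; exact Submodule.zero_mem _
        | add u v _ _ hu hv => rw [lie_add]; exact Submodule.add_mem _ hu hv
        | smul t u _ hu => rw [lie_smul]; exact Submodule.smul_mem _ t hu
      have hx : ⁅x, y⁆ = ∑ i, b.repr x i • ⁅b i, y⁆ := by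
        conv_lhs => rw [← b.sum_repr x]
        rw [sum_lie_aux]
        simp [smul_lie]
      rw [hx]
      exact Submodule.sum_mem _ fun i _ => Submodule.smul_mem _ _ (key i)
    · apply Submodule.span_le.2
      rintro _ ⟨k, ⟨i, j, hj, c, h0, hc⟩, rfl⟩
      have hbj : b j ∈ LieModule.lowerCentralSeries ℝ g g m := by
        have h1 : b j ∈ Submodule.span ℝ (⇑b '' s) := Submodule.subset_span ⟨j, hj, rfl⟩
        rw [← hs] at h1
        exact h1
      have hmem : ⁅b i, b j⁆ ∈ Submodule.span ℝ {z | ∃ x ∈ (⊤ : LieIdeal ℝ g),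
          ∃ w ∈ LieModule.lowerCentralSeries ℝ g g m, ⁅x, w⁆ = z} :=
        Submodule.subset_span ⟨b i, trivial, b j, hbj, rfl⟩
      have hbk : b k = c⁻¹ • ⁅b i, b j⁆ := by
        rw [hc, smul_smul, inv_mul_cancel₀ h0, one_smul]
      rw [hbk]
      exact Submodule.smul_mem _ _ hmem
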